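/- For λ-DSS u₀ and k ∈ ℤ, the annular integrals satisfy ∫_{λ^k<|x|<λ^{k+1}} |u₀(x)|² w_γ(x) dx ≤ (λ^k/(1+λ^k)^γ) ∫_{1<|x|<λ} |u₀(x)|² dx, and the series Σ_{k∈ℤ} λ^k/(1+λ^k)^γ converges when γ > 1. -/

import Mathlib

open MeasureTheory Real ENNReal Pointwise

private lemma ae_smul_comp {P : EuclideanSpace ℝ (Fin 3) → Prop} {c : ℝ} (hc : c ≠ 0)
    (h : ∀ᵐ x ∂(volume : Measure (EuclideanSpace ℝ (Fin 3))), P x) :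
    ∀ᵐ x ∂(volume : Measure (EuclideanSpace ℝ (Fin 3))), P (c • x) := by
  rw [ae_iff] at h ⊢
  have hs : {x : EuclideanSpace ℝ (Fin 3) | ¬ P (c • x)}
      = c⁻¹ • {x : EuclideanSpace ℝ (Fin 3) | ¬ P x} := by
    ext x
    rw [Set.mem_smul_set_iff_inv_smul_mem₀ (inv_ne_zero hc)]
    simp
  rw [hs, Measure.addHaar_smul, h, mul_zero]

private lemma dss_zpow {Λ : ℝ} (hΛ : 0 < Λ)
    {u₀ : EuclideanSpace ℝ (Fin 3) → EuclideanSpace ℝ (Fin 3)}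
    (hdss : ∀ᵐ x ∂(volume : Measure (EuclideanSpace ℝ (Fin 3))), u₀ x = Λ • u₀ (Λ • x))
    (k : ℤ) :
    ∀ᵐ x ∂(volume : Measure (EuclideanSpace ℝ (Fin 3))),
      u₀ x = (Λ ^ k) • u₀ ((Λ ^ k) • x) := by
  induction k using Int.induction_on with
  | zero => simp
  | succ n ih =>
      have h2 := ae_smul_comp (c := Λ ^ (n : ℤ)) (by positivity) hdss
      filter_upwards [ih, h2] with x hx1 hx2
      rw [hx1, hx2, smul_smul, smul_smul, mul_comm Λ (Λ ^ (n : ℤ)),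
        ← zpow_add_one₀ hΛ.ne']
  | pred n ih =>
      have hinv : ∀ᵐ x ∂(volume : Measure (EuclideanSpace ℝ (Fin 3))),
          u₀ (Λ⁻¹ • x) = Λ • u₀ x := by
        have := ae_smul_comp (inv_ne_zero hΛ.ne') hdss
        filter_upwards [this] with x hx
        rw [hx, smul_inv_smul₀ hΛ.ne']
      have h3 := ae_smul_comp (inv_ne_zero hΛ.ne') ih
      filter_upwards [hinv, h3] with x h1 h2
      have h4 : Λ • u₀ x = Λ ^ (-(n : ℤ)) • u₀ ((Λ ^ (-(n : ℤ)) * Λ⁻¹) • x) := by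
        rw [← h1, h2, smul_smul]
      have h5 : u₀ x = (Λ⁻¹ * Λ ^ (-(n : ℤ))) • u₀ ((Λ ^ (-(n : ℤ)) * Λ⁻¹) • x) := by
        rw [mul_smul, ← h4, inv_smul_smul₀ hΛ.ne']
      rw [h5, zpow_sub_one₀ hΛ.ne', mul_comm]

set_option maxHeartbeats 800000 in
theorem dss_annular_bound (γ Λ : ℝ) (hγ : 1 < γ) (hΛ : 1 < Λ)
    (u₀ : EuclideanSpace ℝ (Fin 3) → EuclideanSpace ℝ (Fin 3))
    (hmeas : AEStronglyMeasurable u₀ volume)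
    (hloc : LocallyIntegrable (fun x => ‖u₀ x‖ ^ 2) volume)
    (hdss : ∀ᵐ x ∂(volume : Measure (EuclideanSpace ℝ (Fin 3))), u₀ x = Λ • u₀ (Λ • x)) :
    (∀ k : ℤ,
      ∫ x in {x : EuclideanSpace ℝ (Fin 3) | Λ ^ k < ‖x‖ ∧ ‖x‖ < Λ ^ (k + 1)},
          ‖u₀ x‖ ^ 2 * (1 + ‖x‖) ^ (-γ)
        ≤ (Λ ^ k / (1 + Λ ^ k) ^ γ) *
            ∫ x in {x : EuclideanSpace ℝ (Fin 3) | 1 < ‖x‖ ∧ ‖x‖ < Λ}, ‖u₀ x‖ ^ 2)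
    ∧ Summable (fun k : ℤ => Λ ^ k / (1 + Λ ^ k) ^ γ) := by
  have hΛ0 : (0:ℝ) < Λ := lt_trans one_pos hΛ
  constructor
  · intro k
    set F : EuclideanSpace ℝ (Fin 3) → ℝ := fun x => ‖u₀ x‖ ^ 2 * (1 + ‖x‖) ^ (-γ) with hF
    set R : ℝ := Λ ^ k with hRdef
    have hR : 0 < R := zpow_pos hΛ0 k
    set A0 : Set (EuclideanSpace ℝ (Fin 3)) := {x | 1 < ‖x‖ ∧ ‖x‖ < Λ} with hA0
    set Ak : Set (EuclideanSpace ℝ (Fin 3)) :=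
      {x | Λ ^ k < ‖x‖ ∧ ‖x‖ < Λ ^ (k + 1)} with hAk
    have hA0meas : MeasurableSet A0 := by
      have ho : IsOpen A0 := by
        have he : A0 = {x : EuclideanSpace ℝ (Fin 3) | 1 < ‖x‖}
            ∩ {x : EuclideanSpace ℝ (Fin 3) | ‖x‖ < Λ} := rfl
        rw [he]
        exact (isOpen_lt continuous_const continuous_norm).inter
          (isOpen_lt continuous_norm continuous_const)
      exact ho.measurableSet
    have hset : R • A0 = Ak := by
      ext x
      rw [Set.mem_smul_set_iff_inv_smul_mem₀ hR.ne']
      simp only [hA0, hAk, Set.mem_setOf_eq, norm_smul, norm_inv, Real.norm_eq_abs,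
        abs_of_pos hR, inv_mul_eq_div]
      rw [one_lt_div hR, div_lt_iff₀ hR]
      have he : Λ ^ (k + 1) = Λ * R := by
        rw [hRdef, mul_comm, ← zpow_add_one₀ hΛ0.ne']
      rw [he]
    have h1 : ∫ y in A0, F (R • y) = (R ^ 3)⁻¹ * ∫ x in Ak, F x := by
      rw [← hset]
      simpa [finrank_euclideanSpace_fin, smul_eq_mul] using
        MeasureTheory.Measure.setIntegral_comp_smul_of_pos volume F A0 hR
    have h2 : ∫ x in Ak, F x = R ^ 3 * ∫ y in A0, F (R • y) := by
      rw [h1]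
      field_simp
    have hint : IntegrableOn (fun y => ‖u₀ y‖ ^ 2) A0 volume := by
      apply (hloc.integrableOn_isCompact
        (isCompact_closedBall (0 : EuclideanSpace ℝ (Fin 3)) Λ)).mono_set
      intro x hx
      simpa [mem_closedBall_zero_iff] using le_of_lt hx.2
    have hc2 : (0:ℝ) < (1 + R) ^ (-γ) := by positivity
    have hbound : ∫ y in A0, F (R • y)
        ≤ (R⁻¹ ^ 2 * (1 + R) ^ (-γ)) * ∫ y in A0, ‖u₀ y‖ ^ 2 := by
      rw [← MeasureTheory.integral_const_mul]
      apply integral_mono_of_nonneg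
      · filter_upwards with y
        have h0 : (0:ℝ) < (1 + ‖R • y‖) ^ (-γ) := by positivity
        have h0' : (0:ℝ) ≤ ‖u₀ (R • y)‖ ^ 2 := sq_nonneg _
        positivity
      · exact (hint.const_mul _)
      · have hzp := dss_zpow hΛ0 hdss k
        filter_upwards [ae_restrict_of_ae hzp, ae_restrict_mem hA0meas] with y hy hymem
        have hy1 : 1 < ‖y‖ := hymem.1
        have hnorm : ‖u₀ (R • y)‖ = R⁻¹ * ‖u₀ y‖ := by
          rw [hy, norm_smul, Real.norm_eq_abs, abs_of_pos hR]
          field_simp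
          rfl
        have hns : ‖R • y‖ = R * ‖y‖ := by
          rw [norm_smul, Real.norm_eq_abs, abs_of_pos hR]
        calc F (R • y) = (R⁻¹ * ‖u₀ y‖) ^ 2 * (1 + R * ‖y‖) ^ (-γ) := by
              rw [hF]; dsimp only; rw [hnorm, hns]
          _ ≤ (R⁻¹ * ‖u₀ y‖) ^ 2 * (1 + R) ^ (-γ) := by
              apply mul_le_mul_of_nonneg_left _ (sq_nonneg _)
              apply Real.rpow_le_rpow_of_nonpos (by positivity) _ (by linarith)
              nlinarith
          _ = R⁻¹ ^ 2 * (1 + R) ^ (-γ) * ‖u₀ y‖ ^ 2 := by ring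
    have hne : ((1:ℝ) + R) ^ γ ≠ 0 := by positivity
    have hc : R ^ 3 * (R⁻¹ ^ 2 * (1 + R) ^ (-γ)) = R / (1 + R) ^ γ := by
      rw [Real.rpow_neg (by positivity)]
      field_simp
    calc ∫ x in Ak, F x = R ^ 3 * ∫ y in A0, F (R • y) := h2
      _ ≤ R ^ 3 * ((R⁻¹ ^ 2 * (1 + R) ^ (-γ)) * ∫ y in A0, ‖u₀ y‖ ^ 2) :=
          mul_le_mul_of_nonneg_left hbound (by positivity)
      _ = (R / (1 + R) ^ γ) * ∫ y in A0, ‖u₀ y‖ ^ 2 := by rw [← mul_assoc, hc]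
  · apply Summable.of_nat_of_neg
    · have hr1 : (0:ℝ) ≤ Λ ^ (1 - γ) := by positivity
      have hr2 : Λ ^ (1 - γ) < 1 := Real.rpow_lt_one_of_one_lt_of_neg hΛ (by linarith)
      have hgeo : Summable fun n : ℕ => (Λ ^ (1 - γ)) ^ n :=
        summable_geometric_of_lt_one hr1 hr2
      apply Summable.of_nonneg_of_le (fun n => by positivity) (fun n => ?_) hgeo
      rw [zpow_natCast]
      have hpow : (0:ℝ) < Λ ^ n := by positivity
      calc Λ ^ n / (1 + Λ ^ n) ^ γ ≤ Λ ^ n / (Λ ^ n) ^ γ := by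
            apply div_le_div_of_nonneg_left hpow.le (by positivity)
            exact Real.rpow_le_rpow (by positivity) (by linarith) (by linarith)
        _ = (Λ ^ n) ^ (1 - γ) := by
            rw [Real.rpow_sub hpow, Real.rpow_one]
        _ = (Λ ^ (1 - γ)) ^ n := by
            rw [← Real.rpow_natCast Λ n, ← Real.rpow_mul hΛ0.le, mul_comm,
              Real.rpow_mul hΛ0.le, Real.rpow_natCast]
    · have hgeo : Summable fun n : ℕ => (Λ⁻¹) ^ n :=
        summable_geometric_of_lt_one (by positivity) (inv_lt_one_of_one_lt₀ hΛ)
      apply Summable.of_nonneg_of_le (fun n => by positivity) (fun n => ?_) hgeo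
      have hpow : (0:ℝ) < Λ ^ (-(n:ℤ)) := zpow_pos hΛ0 _
      have hone : (1:ℝ) ≤ (1 + Λ ^ (-(n:ℤ))) ^ γ := by
        have h := Real.rpow_le_rpow (by norm_num)
          (show (1:ℝ) ≤ 1 + Λ ^ (-(n:ℤ)) by linarith)
          (by linarith : (0:ℝ) ≤ γ)
        rwa [Real.one_rpow] at h
      calc Λ ^ (-(n:ℤ)) / (1 + Λ ^ (-(n:ℤ))) ^ γ ≤ Λ ^ (-(n:ℤ)) := div_le_self hpow.le hone
        _ = Λ⁻¹ ^ n := by rw [zpow_neg, zpow_natCast, inv_pow]
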